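/- arXiv:2601.06930 — 11 statements merged into one kernel-verified Lean document; each statement's English description precedes it below -/
import Mathlib

section
/- Let T be a Littlewood–Richardson tableau of skew shape λ/μ and even weight ν. If some entry of T equals 2i+1 for i ≥ 0 (say T(k,j) = 2i+1), then there exist k' > k and some column j' such that T(k',j') = 2(i+1). -/
/-- A partition: weakly decreasing, eventually-zero sequence of naturals.
`part k` is the `k`-th part (1-indexed; `part 0` is a dummy value ≥ `part 1`). -/
structure YPart where
  part : ℕ → ℕ
  antitone : ∀ i j : ℕ, i ≤ j → part j ≤ part i
  evZero : ∃ N, ∀ k, N ≤ k → part k = 0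

/-- The number of nonzero parts (length) of a partition. -/
noncomputable def YPart.len (p : YPart) : ℕ := sSup {k | 1 ≤ k ∧ p.part k ≠ 0}

/-- Containment of partitions (Young diagrams). -/
def YPart.Sub (m l : YPart) : Prop := ∀ k, m.part k ≤ l.part k

/-- A partition is even if `ν_{2i-1} = ν_{2i}` for all `i ≥ 1`. -/
def YPart.IsEven (p : YPart) : Prop := ∀ i : ℕ, p.part (2*i+1) = p.part (2*i+2)

/-- The empty partition. -/
def YPart.zero : YPart := ⟨fun _ => 0, fun _ _ _ => Nat.le_refl 0, ⟨0, fun _ _ => rfl⟩⟩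

/-- Cell `(k,j)` (1-indexed, matrix style) lies in the skew shape `λ/μ`. -/
def InShape (l m : YPart) (k j : ℕ) : Prop :=
  1 ≤ k ∧ m.part k < j ∧ j ≤ l.part k

/-- A semistandard skew tableau of shape `λ/μ` with entries in `[N] = {1,…,N}`;
entries outside the skew shape (including the cells of `μ`) are normalized to `0`. -/
structure IsSSYT (l m : YPart) (N : ℕ) (T : ℕ → ℕ → ℕ) : Prop where
  pos : ∀ k j, InShape l m k j → 1 ≤ T k j ∧ T k j ≤ N
  rowLe : ∀ k j, InShape l m k j → InShape l m k (j+1) → T k j ≤ T k (j+1)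
  colLt : ∀ k j, InShape l m k j → InShape l m (k+1) j → T k j < T (k+1) j
  outside : ∀ k j, ¬ InShape l m k j → T k j = 0

/-- The number of cells of `λ/μ` with entry `i` whose position satisfies `P`. -/
noncomputable def cnt (l m : YPart) (T : ℕ → ℕ → ℕ) (P : ℕ → ℕ → Prop) (i : ℕ) : ℕ :=
  {c : ℕ × ℕ | InShape l m c.1 c.2 ∧ T c.1 c.2 = i ∧ P c.1 c.2}.ncard

/-- A Littlewood–Richardson tableau of shape `λ/μ` and weight `ν` on `[N]`:
a semistandard skew tableau whose reverse row reading word (rows right to left,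
top to bottom) is Yamanouchi of weight `ν`.  The Yamanouchi condition is stated
on all prefixes of the reverse row word: a prefix ends at a cell `(k,j)` and
consists of all cells in earlier rows together with the cells `(k,b)`, `b ≥ j`. -/
structure IsLR (l m nu : YPart) (N : ℕ) (T : ℕ → ℕ → ℕ) : Prop where
  ssyt : IsSSYT l m N T
  weight : ∀ i, 1 ≤ i → cnt l m T (fun _ _ => True) i = nu.part i
  yam : ∀ k j i, 1 ≤ i →
    cnt l m T (fun a b => a < k ∨ (a = k ∧ j ≤ b)) (i+1) ≤
    cnt l m T (fun a b => a < k ∨ (a = k ∧ j ≤ b)) i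

/-- The Sundaram property: every odd entry `2i+1` lies in row `n+i` or above. -/
def Sundaram (n : ℕ) (l m : YPart) (T : ℕ → ℕ → ℕ) : Prop :=
  ∀ k j i, InShape l m k j → T k j = 2*i + 1 → k ≤ n + i

/-- A Sundaram violation occurs in row `k`: some odd entry `2i+1` appears in row
`k` with `k > n+i`. -/
def SundViolRow (n : ℕ) (l m : YPart) (T : ℕ → ℕ → ℕ) (k : ℕ) : Prop :=
  ∃ j i, InShape l m k j ∧ T k j = 2*i + 1 ∧ n + i < k

/-- The symplectic (King/Kwon) condition on a straight-shape tableau `G` of shape `g`: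
`G(k,1) ≥ 2k−1` for every row `k` of `g`. -/
def IsSymplectic (g : YPart) (G : ℕ → ℕ → ℕ) : Prop :=
  ∀ k, 1 ≤ k → k ≤ g.len → 2*k - 1 ≤ G k 1

/-- Row `i` of the partition `μ^{(mm)}` in the left-companion chain of `T`:
with `mm = 2n - r + 1`, the partition `μ^{(mm)}` is the shape occupied by the
entries `< r` (including the `0`-entries on the cells of `μ`) in rows
`r, r+1, …, 2n` of `T`; its `i`-th row comes from row `2n - mm + i` of `T`. -/
noncomputable def compShape (l : YPart) (T : ℕ → ℕ → ℕ) (n mm i : ℕ) : ℕ :=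
  {j : ℕ | 1 ≤ j ∧ j ≤ l.part (2*n - mm + i) ∧ T (2*n - mm + i) j < 2*n - mm + 1}.ncard

/-- The length (number of nonzero rows) of a shape given by its row-length function. -/
noncomputable def shapeLen (f : ℕ → ℕ) : ℕ := sSup {i | 1 ≤ i ∧ f i ≠ 0}

/-- The entry of the left companion tableau `G_μ(T)` in cell `(k,j)`:
the least `mm` such that `(k,j)` is a cell of `μ^{(mm)}`. -/
noncomputable def leftCompanion (l : YPart) (T : ℕ → ℕ → ℕ) (n k j : ℕ) : ℕ :=
  sInf {mm | j ≤ compShape l T n mm k}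

/-- In an LR tableau of even weight, every odd entry `2i+1` has an
entry `2(i+1)` strictly below it. -/
theorem stmt2 (n : ℕ) (lam mu nu : YPart) (hl : lam.len ≤ 2*n) (hsub : mu.Sub lam)
    (hnu : nu.IsEven) (T : ℕ → ℕ → ℕ) (hT : IsLR lam mu nu (2*n) T)
    (k j i : ℕ) (hcell : InShape lam mu k j) (hval : T k j = 2*i + 1) :
    ∃ k' j', k < k' ∧ InShape lam mu k' j' ∧ T k' j' = 2*(i+1) := by
  classical
  obtain ⟨N0, hN0⟩ := lam.evZero
  -- finiteness of any set of cells in the shape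
  have hfin : ∀ Q : ℕ × ℕ → Prop,
      {c : ℕ × ℕ | InShape lam mu c.1 c.2 ∧ Q c}.Finite := by
    intro Q
    apply Set.Finite.subset ((Set.finite_Iic N0).prod (Set.finite_Iic (lam.part 0)))
    rintro ⟨a, b⟩ ⟨⟨ha, hb1, hb2⟩, -⟩
    dsimp only at ha hb1 hb2
    constructor
    · by_contra h
      simp only [Set.mem_Iic, not_le] at h
      have h0 := hN0 a h.le
      omega
    · exact Set.mem_Iic.mpr (hb2.trans (lam.antitone 0 a (Nat.zero_le a)))
  set P : ℕ → ℕ → Prop := fun a b => a < k ∨ (a = k ∧ j ≤ b) with hP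
  set P' : ℕ → ℕ → Prop := fun a b => a < k ∨ (a = k ∧ j + 1 ≤ b) with hP'
  -- count of 2i+1 : prefix P has exactly one more than prefix P'
  have h1 : cnt lam mu T P (2*i+1) = cnt lam mu T P' (2*i+1) + 1 := by
    have hset : {c : ℕ × ℕ | InShape lam mu c.1 c.2 ∧ T c.1 c.2 = 2*i+1 ∧ P c.1 c.2}
        = insert (k, j) {c : ℕ × ℕ | InShape lam mu c.1 c.2 ∧ T c.1 c.2 = 2*i+1 ∧ P' c.1 c.2} := by
      ext ⟨a, b⟩
      simp only [Set.mem_setOf_eq, Set.mem_insert_iff, Prod.mk.injEq, hP, hP']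
      constructor
      · rintro ⟨hs, hv, hp⟩
        rcases hp with h | ⟨rfl, hb⟩
        · exact Or.inr ⟨hs, hv, Or.inl h⟩
        · rcases eq_or_lt_of_le hb with rfl | hb'
          · exact Or.inl ⟨rfl, rfl⟩
          · exact Or.inr ⟨hs, hv, Or.inr ⟨rfl, hb'⟩⟩
      · rintro (⟨rfl, rfl⟩ | ⟨hs, hv, hp⟩)
        · exact ⟨hcell, hval, Or.inr ⟨rfl, le_refl _⟩⟩
        · refine ⟨hs, hv, ?_⟩
          rcases hp with h | ⟨rfl, hb⟩
          · exact Or.inl h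
          · exact Or.inr ⟨rfl, by omega⟩
    have hnotmem : (k, j) ∉
        {c : ℕ × ℕ | InShape lam mu c.1 c.2 ∧ T c.1 c.2 = 2*i+1 ∧ P' c.1 c.2} := by
      rintro ⟨-, -, h | ⟨-, hb⟩⟩
      · omega
      · omega
    unfold cnt
    rw [hset, Set.ncard_insert_of_notMem hnotmem (hfin _)]
  -- count of 2i+2 : equal for the two prefixes
  have h2 : cnt lam mu T P (2*i+2) = cnt lam mu T P' (2*i+2) := by
    unfold cnt
    congr 1
    ext ⟨a, b⟩
    simp only [Set.mem_setOf_eq, hP, hP']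
    constructor
    · rintro ⟨hs, hv, hp⟩
      refine ⟨hs, hv, ?_⟩
      rcases hp with h | ⟨rfl, hb⟩
      · exact Or.inl h
      · rcases eq_or_lt_of_le hb with rfl | hb'
        · exact absurd hv (by omega)
        · exact Or.inr ⟨rfl, hb'⟩
    · rintro ⟨hs, hv, hp⟩
      refine ⟨hs, hv, ?_⟩
      rcases hp with h | ⟨rfl, hb⟩
      · exact Or.inl h
      · exact Or.inr ⟨rfl, by omega⟩
  -- Yamanouchi at prefix P'
  have hy : cnt lam mu T P' (2*i+2) ≤ cnt lam mu T P' (2*i+1) := by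
    have := hT.yam k (j+1) (2*i+1) (by omega)
    have h22 : 2*i+1+1 = 2*i+2 := by ring
    rw [h22] at this
    exact this
  -- split total counts
  have hsplit : ∀ v, cnt lam mu T (fun _ _ => True) v
      = cnt lam mu T P v + cnt lam mu T (fun a b => ¬ P a b) v := by
    intro v
    unfold cnt
    rw [← Set.ncard_union_eq ?disj (hfin _) (hfin _)]
    · congr 1
      ext ⟨a, b⟩
      simp only [Set.mem_setOf_eq, Set.mem_union]
      by_cases hp : P a b <;> tauto
    case disj =>
      rw [Set.disjoint_left]
      rintro ⟨a, b⟩ ⟨-, -, hp⟩ ⟨-, -, hnp⟩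
      exact hnp hp
  have ht1 : cnt lam mu T (fun _ _ => True) (2*i+1) = nu.part (2*i+1) :=
    hT.weight (2*i+1) (by omega)
  have ht2 : cnt lam mu T (fun _ _ => True) (2*i+2) = nu.part (2*i+2) :=
    hT.weight (2*i+2) (by omega)
  have heven := hnu i
  have hs1 := hsplit (2*i+1)
  have hs2 := hsplit (2*i+2)
  -- there is a 2i+2 outside the prefix
  have hpos : cnt lam mu T (fun a b => ¬ P a b) (2*i+2) ≠ 0 := by omega
  have hne : {c : ℕ × ℕ | InShape lam mu c.1 c.2 ∧ T c.1 c.2 = 2*i+2 ∧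
      ¬ P c.1 c.2}.Nonempty := by
    rw [Set.nonempty_iff_ne_empty]
    intro hemp
    apply hpos
    unfold cnt
    rw [hemp, Set.ncard_empty]
  obtain ⟨⟨a, b⟩, hs, hv, hnp⟩ := hne
  dsimp only at hs hv hnp
  simp only [hP, not_or, not_and, not_lt, not_le] at hnp
  obtain ⟨hka, hkb⟩ := hnp
  rcases eq_or_lt_of_le hka with rfl | hlt
  · -- same row, column b < j : contradiction with row monotonicity
    exfalso
    have hbj : b < j := hkb rfl
    have hrow : ∀ d, b + d ≤ lam.part k → T k b ≤ T k (b + d) := by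
      intro d
      induction d with
      | zero => intro _; exact le_refl _
      | succ d ih =>
        intro hd
        have hsd : InShape lam mu k (b + d) := ⟨hs.1, by have := hs.2.1; omega, by omega⟩
        have hsd1 : InShape lam mu k (b + d + 1) := ⟨hs.1, by have := hs.2.1; omega, by omega⟩
        calc T k b ≤ T k (b + d) := ih (by omega)
          _ ≤ T k (b + d + 1) := hT.ssyt.rowLe k (b + d) hsd hsd1
    have := hrow (j - b) (by have := hcell.2.2; omega)
    rw [show b + (j - b) = j by omega, hval] at this
    omega
  · exact ⟨a, b, hlt, hs, by omega⟩
end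

section
/- Let T be a Littlewood–Richardson tableau of skew shape λ/μ and even weight ν. If the first-column entry in row k satisfies T(k,1) = 2i+1 for some i ≥ 0, then T(k+1,1) = 2(i+1). -/
/-- In an LR tableau of even weight, if `T(k,1) = 2i+1` then
`T(k+1,1) = 2(i+1)`. -/
theorem stmt3 (n : ℕ) (lam mu nu : YPart) (hl : lam.len ≤ 2*n) (hsub : mu.Sub lam)
    (hnu : nu.IsEven) (T : ℕ → ℕ → ℕ) (hT : IsLR lam mu nu (2*n) T)
    (k i : ℕ) (hcell : InShape lam mu k 1) (hval : T k 1 = 2*i + 1) :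
    InShape lam mu (k+1) 1 ∧ T (k+1) 1 = 2*(i+1) := by
  obtain ⟨hk1, hmuk, hlamk⟩ := hcell
  have hmuk0 : mu.part k = 0 := Nat.lt_one_iff.mp hmuk
  have hmu0 : ∀ a, k ≤ a → mu.part a = 0 := fun a ha =>
    Nat.le_zero.mp (hmuk0 ▸ mu.antitone k a ha)
  -- finiteness of counted sets
  have hfin : ∀ (P : ℕ → ℕ → Prop) (v : ℕ),
      {c : ℕ × ℕ | InShape lam mu c.1 c.2 ∧ T c.1 c.2 = v ∧ P c.1 c.2}.Finite := by
    obtain ⟨N, hN⟩ := lam.evZero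
    intro P v
    apply Set.Finite.subset ((Set.finite_Iio N).prod (Set.finite_Iic (lam.part 0)))
    intro x hx
    obtain ⟨⟨h1, h2, h3⟩, -, -⟩ := hx
    constructor
    · simp only [Set.mem_Iio]
      by_contra h
      have := hN x.1 (le_of_not_gt h)
      omega
    · simp only [Set.mem_Iic]
      exact le_trans h3 (lam.antitone 0 x.1 (Nat.zero_le _))
  -- rows ≥ k are contiguous from column 1
  have hshape1 : ∀ a b, k ≤ a → a ≤ b → InShape lam mu b 1 → InShape lam mu a 1 := by
    rintro a b hka hab ⟨hb1, -, hb3⟩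
    exact ⟨le_trans hk1 hka, by rw [hmu0 a hka]; omega,
      le_trans hb3 (lam.antitone a b hab)⟩
  -- column monotone going down from row ≥ k
  have hcolmono : ∀ d a, k ≤ a → InShape lam mu (a + d) 1 → T a 1 + d ≤ T (a + d) 1 := by
    intro d
    induction d with
    | zero => intro a _ _; simp
    | succ d ih =>
      intro a ha hs
      rw [show a + (d + 1) = a + d + 1 from rfl] at hs ⊢
      have hs' : InShape lam mu (a + d) 1 :=
        hshape1 (a + d) (a + d + 1) (by omega) (by omega) hs
      have h1 := hT.ssyt.colLt (a + d) 1 hs' hs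
      have h2 := ih a ha hs'
      omega
  -- row weakly increasing from column 1, rows ≥ k
  have hrow : ∀ a, k ≤ a → ∀ c, c ≤ lam.part a → T a 1 ≤ T a c ∨ c = 0 := by
    intro a ha c
    have ha1 : 1 ≤ a := le_trans hk1 ha
    have hmu0a := hmu0 a ha
    induction c with
    | zero => intro _; exact Or.inr rfl
    | succ c ih =>
      intro hc3
      left
      rcases Nat.eq_zero_or_pos c with hc0 | hcpos
      · subst hc0; exact le_refl _
      · have hsc : InShape lam mu a c := ⟨ha1, by omega, by omega⟩
        have hsc1 : InShape lam mu a (c + 1) := ⟨ha1, by omega, hc3⟩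
        have h1 := hT.ssyt.rowLe a c hsc hsc1
        have h2 := ih (by omega)
        omega
  -- counting: weight and Yamanouchi
  have hw1 := hT.weight (2*i+1) (by omega)
  have hw2 := hT.weight (2*i+2) (by omega)
  have hnui := hnu i
  have hyam : cnt lam mu T (fun a b => a < k ∨ (a = k ∧ 2 ≤ b)) (2*i+2) ≤
      cnt lam mu T (fun a b => a < k ∨ (a = k ∧ 2 ≤ b)) (2*i+1) :=
    hT.yam k 2 (2*i+1) (by omega)
  -- there is an entry 2i+2 strictly below row k
  have hex : ∃ a c, k < a ∧ InShape lam mu a c ∧ T a c = 2*i + 2 := by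
    by_contra h
    push_neg at h
    have hsub2 : {c : ℕ × ℕ | InShape lam mu c.1 c.2 ∧ T c.1 c.2 = 2*i+2 ∧ True} ⊆
        {c : ℕ × ℕ | InShape lam mu c.1 c.2 ∧ T c.1 c.2 = 2*i+2 ∧
          (c.1 < k ∨ (c.1 = k ∧ 2 ≤ c.2))} := by
      rintro ⟨a, b⟩ ⟨hin, hv, -⟩
      replace hin : InShape lam mu a b := hin
      replace hv : T a b = 2*i+2 := hv
      refine ⟨hin, hv, show a < k ∨ (a = k ∧ 2 ≤ b) from ?_⟩
      have hak : ¬ k < a := fun hka => h a b hka hin hv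
      rcases Nat.lt_or_ge a k with h1 | h1
      · exact Or.inl h1
      · have hak' : a = k := by omega
        subst hak'
        have hb1 : 1 ≤ b := by have := hin.2.1; omega
        rcases Nat.lt_or_ge b 2 with hb2 | hb2
        · have : b = 1 := by omega
          subst this
          omega
        · exact Or.inr ⟨rfl, hb2⟩
    have h2 : cnt lam mu T (fun _ _ => True) (2*i+2) ≤
        cnt lam mu T (fun a b => a < k ∨ (a = k ∧ 2 ≤ b)) (2*i+2) := by
      simp only [cnt]
      exact Set.ncard_le_ncard hsub2 (hfin (fun a b => a < k ∨ (a = k ∧ 2 ≤ b)) (2*i+2))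
    have hssub : {c : ℕ × ℕ | InShape lam mu c.1 c.2 ∧ T c.1 c.2 = 2*i+1 ∧
          (c.1 < k ∨ (c.1 = k ∧ 2 ≤ c.2))} ⊂
        {c : ℕ × ℕ | InShape lam mu c.1 c.2 ∧ T c.1 c.2 = 2*i+1 ∧ True} := by
      constructor
      · rintro c ⟨hin, hv, -⟩; exact ⟨hin, hv, trivial⟩
      · intro hcon
        have hmem := hcon (show ((k, 1) : ℕ × ℕ) ∈ _ from
          ⟨⟨hk1, hmuk, hlamk⟩, hval, trivial⟩)
        obtain ⟨-, -, hP⟩ := hmem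
        simp only at hP
        omega
    have h1 : cnt lam mu T (fun a b => a < k ∨ (a = k ∧ 2 ≤ b)) (2*i+1) <
        cnt lam mu T (fun _ _ => True) (2*i+1) := by
      simp only [cnt]
      exact Set.ncard_lt_ncard hssub (hfin (fun _ _ => True) (2*i+1))
    omega
  obtain ⟨a, c, hka, hac, hvac⟩ := hex
  have hc1 : 1 ≤ c := by have := hac.2.1; omega
  have hlamk1 : 1 ≤ lam.part (k+1) :=
    le_trans (le_trans hc1 hac.2.2) (lam.antitone (k+1) a hka)
  have hshapek1 : InShape lam mu (k+1) 1 :=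
    ⟨by omega, by rw [hmu0 (k+1) (by omega)]; omega, hlamk1⟩
  have hlt := hT.ssyt.colLt k 1 ⟨hk1, hmuk, hlamk⟩ hshapek1
  have hsa : InShape lam mu ((k+1) + (a - (k+1))) 1 := by
    rw [show (k+1) + (a - (k+1)) = a from by omega]
    exact ⟨by omega, by rw [hmu0 a (by omega)]; omega, le_trans hc1 hac.2.2⟩
  have h1a := hcolmono (a - (k+1)) (k+1) (by omega) hsa
  rw [show (k+1) + (a - (k+1)) = a from by omega] at h1a
  have h1c : T a 1 ≤ T a c := by
    rcases hrow a (by omega) c hac.2.2 with h | h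
    · exact h
    · omega
  exact ⟨hshapek1, by omega⟩
end

section
/- Let T be an LR tableau of shape λ/μ and even weight ν on [2n] with ℓ(μ) ≤ n. Then T satisfies the Sundaram property if and only if for every t ≥ 1 (with row n+t nonempty in λ/μ), either T(n+t,1) is even and ≥ 2t, or T(n+t,1) is odd and ≥ 2t+1. In particular, it suffices to check the Sundaram condition on the first column of T. -/
/-- If `ℓ(μ) ≤ n` then rows beyond `n` of `μ` are empty. -/
lemma mu_part_zero (mu : YPart) (n : ℕ) (hmu : mu.len ≤ n) {k : ℕ} (hk : n < k) :
    mu.part k = 0 := by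
  by_contra h
  obtain ⟨N, hN⟩ := mu.evZero
  have hbdd : BddAbove {k | 1 ≤ k ∧ mu.part k ≠ 0} := by
    refine ⟨N, fun x hx => ?_⟩
    by_contra hxN
    exact hx.2 (hN x (by omega))
  have hkmem : k ∈ {k | 1 ≤ k ∧ mu.part k ≠ 0} := ⟨by omega, h⟩
  have := le_csSup hbdd hkmem
  have : k ≤ mu.len := this
  omega

/-- Row monotonicity from column `b` to column `b + d`. -/
lemma row_mono (lam mu : YPart) (N : ℕ) (T : ℕ → ℕ → ℕ) (hS : IsSSYT lam mu N T)
    {k : ℕ} (hk0 : mu.part k = 1 - 1) (hk1 : 1 ≤ k) :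
    ∀ d b, 1 ≤ b → b + d ≤ lam.part k → T k b ≤ T k (b + d) := by
  intro d
  induction d with
  | zero => intro b _ _; exact le_refl _
  | succ d ih =>
      intro b hb hbd
      have h1 : T k b ≤ T k (b + d) := ih b hb (by omega)
      have h2 : T k (b + d) ≤ T k (b + d + 1) := by
        apply hS.rowLe
        · exact ⟨hk1, by omega, by omega⟩
        · exact ⟨hk1, by omega, by omega⟩
      have h3 : T k (b + (d + 1)) = T k (b + d + 1) := rfl
      omega

/-- An LR tableau of even weight with `ℓ(μ) ≤ n` satisfies the
Sundaram property iff for every `t ≥ 1` with row `n+t` nonempty, the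
first-column entry `T(n+t,1)` is even and `≥ 2t`, or odd and `≥ 2t+1`. -/
theorem stmt7 (n : ℕ) (lam mu nu : YPart) (hl : lam.len ≤ 2*n) (hsub : mu.Sub lam)
    (hmu : mu.len ≤ n) (hnu : nu.IsEven) (T : ℕ → ℕ → ℕ)
    (hT : IsLR lam mu nu (2*n) T) :
    Sundaram n lam mu T ↔
      ∀ t, 1 ≤ t → InShape lam mu (n+t) 1 →
        (Even (T (n+t) 1) ∧ 2*t ≤ T (n+t) 1) ∨
        (Odd (T (n+t) 1) ∧ 2*t + 1 ≤ T (n+t) 1) := by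
  have hS := hT.ssyt
  constructor
  · -- Sundaram → first-column condition, by induction on t
    intro hSund t
    induction t with
    | zero => omega
    | succ t ih =>
        intro _ hin
        have heq : T (n+(t+1)) 1 = T (n+t+1) 1 := rfl
        have hv1 : 1 ≤ T (n+(t+1)) 1 := (hS.pos _ _ hin).1
        rcases Nat.even_or_odd (T (n+(t+1)) 1) with hev | hod
        · -- even case
          left
          refine ⟨hev, ?_⟩
          obtain ⟨r, hr⟩ := hev
          rcases Nat.eq_zero_or_pos t with ht0 | ht1
          · subst ht0; omega
          · -- use the cell above, (n+t, 1)
            have hinup : InShape lam mu (n+t) 1 := by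
              refine ⟨by omega, ?_, ?_⟩
              · rw [mu_part_zero mu n hmu (by omega)]; omega
              · have := lam.antitone (n+t) (n+(t+1)) (by omega)
                have := hin.2.2
                omega
            have hcol : T (n+t) 1 < T (n+(t+1)) 1 := by
              have := hS.colLt (n+t) 1 hinup (by
                have : n + t + 1 = n + (t+1) := by omega
                rw [this]; exact hin)
              omega
            rcases ih ht1 hinup with ⟨_, h2⟩ | ⟨_, h2⟩ <;> omega
        · -- odd case: direct from Sundaram
          right
          refine ⟨hod, ?_⟩
          obtain ⟨i, hi⟩ := hod
          have := hSund (n+(t+1)) 1 i hin (by omega)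
          omega
  · -- first-column condition → Sundaram
    intro h k j i hin hv
    by_contra hk
    push_neg at hk
    set t := k - n with ht
    have ht1 : 1 ≤ t := by omega
    have hkt : k = n + t := by omega
    have hmuk : mu.part k = 0 := mu_part_zero mu n hmu (by omega)
    have hj1 : 1 ≤ j := by have := hin.2.1; omega
    have hin1 : InShape lam mu k 1 := ⟨hin.1, by omega, by have := hin.2.2; omega⟩
    have hrow : T k 1 ≤ T k j := by
      have := row_mono lam mu (2*n) T hS (by omega) hin.1 (j-1) 1 (le_refl 1)
        (by have := hin.2.2; omega)
      have hj : 1 + (j-1) = j := by omega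
      rwa [hj] at this
    have := h t ht1 (by rw [← hkt]; exact hin1)
    rw [← hkt] at this
    rcases this with ⟨⟨r, hr⟩, h2⟩ | ⟨⟨r, hr⟩, h2⟩ <;> omega
end

section
/- Let T be an LR tableau of shape λ/μ and even weight ν on [2n] with ℓ(μ) ≤ n. Then T fails the Sundaram property if and only if there exist t > i ≥ 0 such that T(n+t,1) = 2i+1. -/
lemma YPart.part_eq_zero_of_len_lt (p : YPart) {k : ℕ} (hk : 1 ≤ k) (h : p.len < k) :
    p.part k = 0 := by
  by_contra h0
  have hbdd : BddAbove {k | 1 ≤ k ∧ p.part k ≠ 0} := by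
    obtain ⟨N, hN⟩ := p.evZero
    refine ⟨N, fun x hx => ?_⟩
    by_contra hx'
    exact hx.2 (hN x (le_of_not_ge hx'))
  have := le_csSup hbdd (show k ∈ {k | 1 ≤ k ∧ p.part k ≠ 0} from ⟨hk, h0⟩)
  exact absurd this (not_le.mpr h)

lemma row_head_le (lam mu : YPart) (N : ℕ) (T : ℕ → ℕ → ℕ) (hS : IsSSYT lam mu N T)
    {k : ℕ} (hk0 : mu.part k = 0) (hk1 : 1 ≤ k) :
    ∀ j, InShape lam mu k j → T k 1 ≤ T k j := by
  intro j
  induction j with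
  | zero => intro h; exact absurd h.2.1 (by omega)
  | succ j ih =>
    intro h
    obtain ⟨-, h2, h3⟩ := h
    have h : InShape lam mu k (j+1) := ⟨hk1, h2, h3⟩
    rcases Nat.eq_zero_or_pos j with hj | hj
    · subst hj; exact le_refl _
    · have hjs : InShape lam mu k j := ⟨hk1, by omega, by omega⟩
      exact le_trans (ih hjs) (hS.rowLe k j hjs h)

/-- An LR tableau of even weight with `ℓ(μ) ≤ n` fails the Sundaram
property iff `T(n+t,1) = 2i+1` for some `t > i ≥ 0`. -/
theorem stmt8 (n : ℕ) (lam mu nu : YPart) (hl : lam.len ≤ 2*n) (hsub : mu.Sub lam)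
    (hmu : mu.len ≤ n) (hnu : nu.IsEven) (T : ℕ → ℕ → ℕ)
    (hT : IsLR lam mu nu (2*n) T) :
    ¬ Sundaram n lam mu T ↔
      ∃ t i : ℕ, i < t ∧ InShape lam mu (n+t) 1 ∧ T (n+t) 1 = 2*i + 1 := by
  constructor
  · intro hns
    simp only [Sundaram, not_forall] at hns
    obtain ⟨k, j, i, hshape, hval, hlt⟩ := hns
    push_neg at hlt
    have hk1 : 1 ≤ k := hshape.1
    have hkn : n + 1 ≤ k := by omega
    have hmu0 : ∀ r, n + 1 ≤ r → mu.part r = 0 := fun r hr =>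
      mu.part_eq_zero_of_len_lt (by omega) (by omega)
    have hsk1 : InShape lam mu k 1 := ⟨hk1, by rw [hmu0 k hkn]; omega, by
      have h1 := hshape.2.1; have h2 := hshape.2.2; omega⟩
    have hhead : T k 1 ≤ 2 * i + 1 := by
      have := row_head_le lam mu (2*n) T hT.ssyt (hmu0 k hkn) hk1 j hshape
      omega
    have key : ∀ s : ℕ, InShape lam mu (n + s + 1) 1 → T (n + s + 1) 1 ≤ 2 * s + 1 →
        ∃ t i : ℕ, i < t ∧ InShape lam mu (n+t) 1 ∧ T (n+t) 1 = 2*i + 1 := by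
      intro s
      induction s with
      | zero =>
        intro hsh hle
        simp only [Nat.add_zero] at hsh hle
        have hpos := (hT.ssyt.pos _ _ hsh).1
        exact ⟨1, 0, by omega, hsh, by omega⟩
      | succ s ih =>
        intro hsh hle
        rw [show n + (s + 1) + 1 = n + s + 2 from by omega] at hsh hle
        have hpos := (hT.ssyt.pos _ _ hsh).1
        rcases Nat.even_or_odd (T (n + s + 2) 1) with ⟨m, hm⟩ | ⟨m, hm⟩
        · have hsh' : InShape lam mu (n + s + 1) 1 :=
            ⟨by omega, by rw [hmu0 (n+s+1) (by omega)]; omega,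
              le_trans hsh.2.2 (lam.antitone _ _ (by omega))⟩
          have hcol : T (n + s + 1) 1 < T (n + s + 2) 1 :=
            hT.ssyt.colLt (n + s + 1) 1 hsh' hsh
          exact ih hsh' (by omega)
        · exact ⟨s + 2, m, by omega, hsh, hm⟩
    have hks : k = n + (k - n - 1) + 1 := by omega
    refine key (k - n - 1) (by rw [← hks]; exact hsk1) (by rw [← hks]; omega)
  · rintro ⟨t, i, hti, hsh, hval⟩
    intro hsund
    have := hsund (n + t) 1 i hsh hval
    omega
end

section
/- Let T be an LR tableau of shape λ/μ and even weight ν on [2n] with ℓ(μ) ≤ n. If T(n+t,1) is even and strictly less than 2t for some t ≥ 1, then there exists s with 1 ≤ s < t such that T(n+s,1) is odd and strictly less than 2s+1. -/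
/-- In an LR tableau of even weight with `ℓ(μ) ≤ n`, if `T(n+t,1)`
is even and `< 2t` for some `t ≥ 1`, then `T(n+s,1)` is odd and `< 2s+1` for
some `1 ≤ s < t`. -/
theorem stmt9 (n : ℕ) (lam mu nu : YPart) (hl : lam.len ≤ 2*n) (hsub : mu.Sub lam)
    (hmu : mu.len ≤ n) (hnu : nu.IsEven) (T : ℕ → ℕ → ℕ)
    (hT : IsLR lam mu nu (2*n) T)
    (t : ℕ) (ht : 1 ≤ t) (hrow : InShape lam mu (n+t) 1)
    (hev : Even (T (n+t) 1)) (hlt : T (n+t) 1 < 2*t) :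
    ∃ s, 1 ≤ s ∧ s < t ∧ Odd (T (n+s) 1) ∧ T (n+s) 1 < 2*s + 1 := by
  by_contra hcon
  push_neg at hcon
  -- μ vanishes below row n
  have hmu0 : ∀ k, n < k → mu.part k = 0 := by
    intro k hk
    by_contra hne
    obtain ⟨N, hN⟩ := mu.evZero
    have hbdd : BddAbove {k | 1 ≤ k ∧ mu.part k ≠ 0} := by
      refine ⟨N, fun m hm => ?_⟩
      by_contra hm'
      exact hm.2 (hN m (by omega))
    have : k ≤ mu.len := le_csSup hbdd ⟨by omega, hne⟩
    have := hmu
    unfold YPart.len at *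
    omega
  -- all first-column cells in rows n+1..n+t are in the shape
  have hins : ∀ s, 1 ≤ s → s ≤ t → InShape lam mu (n+s) 1 := by
    intro s hs1 hst
    refine ⟨by omega, by rw [hmu0 (n+s) (by omega)]; omega, ?_⟩
    have := lam.antitone (n+s) (n+t) (by omega)
    exact le_trans hrow.2.2 this
  -- column strictness
  have hmono : ∀ s, 1 ≤ s → s + 1 ≤ t → T (n+s) 1 < T (n+s+1) 1 := by
    intro s hs1 hst
    have := hT.ssyt.colLt (n+s) 1 (hins s hs1 (by omega)) ?_
    · exact this
    · have := hins (s+1) (by omega) hst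
      simpa [Nat.add_assoc] using this
  -- main induction: T(n+s,1) ≥ 2s for 1 ≤ s < t
  have key : ∀ s, 1 ≤ s → s < t → 2*s ≤ T (n+s) 1 := by
    intro s
    induction s with
    | zero => omega
    | succ s ih =>
      intro _ hst
      show 2*(s+1) ≤ T (n+s+1) 1
      rcases Nat.eq_zero_or_pos s with hs0 | hs1
      · subst hs0
        show 2*1 ≤ T (n+1) 1
        have hpos := (hT.ssyt.pos (n+1) 1 (hins 1 le_rfl (by omega))).1
        by_contra hlt2
        have heq : T (n+1) 1 = 1 := by omega
        have h5 : 2*1 + 1 ≤ T (n+1) 1 := hcon 1 le_rfl hst ⟨0, by omega⟩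
        omega
      · have h1 := ih hs1 (by omega)
        have h2 := hmono s hs1 (by omega)
        by_contra hlt2
        have heq : T (n+s+1) 1 = 2*s + 1 := by omega
        have h3 := hcon (s+1) (by omega) hst ⟨s, heq⟩
        have h4 : 2*(s+1) + 1 ≤ T (n+s+1) 1 := h3
        omega
  obtain ⟨r, hr⟩ := hev
  rcases Nat.eq_or_lt_of_le ht with h1 | h2
  · -- t = 1 : T(n+1,1) ≥ 1, even, < 2 — impossible
    have hpos := (hT.ssyt.pos (n+t) 1 hrow).1
    omega
  · -- t ≥ 2 : key (t-1) plus strictness forces T(n+t,1) = 2t-1, odd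
    have h1 := key (t-1) (by omega) (by omega)
    have h2 := hmono (t-1) (by omega) (by omega)
    have heq : n + (t-1) + 1 = n + t := by omega
    rw [heq] at h2
    omega
end

section
/- Let T be an LR tableau of shape λ/μ and even weight ν on [2n] with ℓ(μ) ≤ n. If T(n+s,1) is odd and strictly less than 2s+1 for some s ≥ 1, then there exists t with s < t such that T(n+t,1) is even and strictly less than 2t. -/
/-- Any set of cells of the skew shape `λ/μ` is finite. -/
lemma shape_finite (l m : YPart) (Q : ℕ × ℕ → Prop) :
    {c : ℕ × ℕ | InShape l m c.1 c.2 ∧ Q c}.Finite := by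
  obtain ⟨N, hN⟩ := l.evZero
  apply Set.Finite.subset ((Set.finite_Iio N).prod (Set.finite_Iic (l.part 0)))
  intro c hc
  obtain ⟨⟨hk1, hmj, hjl⟩, -⟩ := hc
  refine ⟨?_, ?_⟩
  · simp only [Set.mem_Iio]
    by_contra h
    have := hN c.1 (by omega)
    omega
  · simp only [Set.mem_Iic]
    exact hjl.trans (l.antitone 0 c.1 (Nat.zero_le c.1))

/-- Splitting a count over a position predicate and its negation. -/
lemma cnt_split (l m : YPart) (T : ℕ → ℕ → ℕ) (P : ℕ → ℕ → Prop) (v : ℕ) :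
    cnt l m T (fun _ _ => True) v
      = cnt l m T P v + cnt l m T (fun a b => ¬ P a b) v := by
  unfold cnt
  rw [← Set.ncard_union_eq ?_ (shape_finite l m _) (shape_finite l m _)]
  · congr 1
    ext ⟨k, j⟩
    simp only [Set.mem_setOf_eq, Set.mem_union]
    tauto
  · rw [Set.disjoint_left]
    rintro ⟨k, j⟩ h1 h2
    exact h2.2.2 h1.2.2

/-- In an LR tableau of even weight with `ℓ(μ) ≤ n`, if `T(n+s,1)`
is odd and `< 2s+1` for some `s ≥ 1`, then `T(n+t,1)` is even and `< 2t` for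
some `t > s`. -/
theorem stmt10 (n : ℕ) (lam mu nu : YPart) (hl : lam.len ≤ 2*n) (hsub : mu.Sub lam)
    (hmu : mu.len ≤ n) (hnu : nu.IsEven) (T : ℕ → ℕ → ℕ)
    (hT : IsLR lam mu nu (2*n) T)
    (s : ℕ) (hs : 1 ≤ s) (hrow : InShape lam mu (n+s) 1)
    (hodd : Odd (T (n+s) 1)) (hlt : T (n+s) 1 < 2*s + 1) :
    ∃ t, s < t ∧ InShape lam mu (n+t) 1 ∧ Even (T (n+t) 1) ∧ T (n+t) 1 < 2*t := by
  classical
  -- μ vanishes beyond row n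
  have muzero : ∀ r, n < r → mu.part r = 0 := by
    intro r hr
    by_contra h
    obtain ⟨N, hN⟩ := mu.evZero
    have hbdd : BddAbove {k | 1 ≤ k ∧ mu.part k ≠ 0} := by
      refine ⟨N, fun k hk => ?_⟩
      by_contra hkN
      exact hk.2 (hN k (le_of_not_ge hkN))
    have : r ≤ mu.len := le_csSup hbdd ⟨by omega, h⟩
    omega
  obtain ⟨i', hi'⟩ := hodd
  -- counting setup
  have hw1 : cnt lam mu T (fun _ _ => True) (2*i'+1) = nu.part (2*i'+1) :=
    hT.weight (2*i'+1) (by omega)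
  have hw2 : cnt lam mu T (fun _ _ => True) (2*i'+2) = nu.part (2*i'+2) :=
    hT.weight (2*i'+2) (by omega)
  have hnueq : nu.part (2*i'+1) = nu.part (2*i'+2) := hnu i'
  have hyam := hT.yam (n+s) 2 (2*i'+1) (by omega)
  have he : 2*i'+1+1 = 2*i'+2 := rfl
  rw [he] at hyam
  have h1 := cnt_split lam mu T (fun a b => a < n+s ∨ (a = n+s ∧ 2 ≤ b)) (2*i'+1)
  have h2 := cnt_split lam mu T (fun a b => a < n+s ∨ (a = n+s ∧ 2 ≤ b)) (2*i'+2)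
  -- the suffix contains at least one 2i'+1, namely at (n+s,1)
  have hB1 : 0 < cnt lam mu T (fun a b => ¬ (a < n+s ∨ (a = n+s ∧ 2 ≤ b))) (2*i'+1) := by
    unfold cnt
    rw [Set.ncard_pos (shape_finite lam mu _)]
    exact ⟨(n+s, 1), hrow, hi', by omega⟩
  have hB2 : 0 < cnt lam mu T (fun a b => ¬ (a < n+s ∨ (a = n+s ∧ 2 ≤ b))) (2*i'+2) := by
    omega
  -- extract a cell with entry 2i'+2 in the suffix
  have hne : {c : ℕ × ℕ | InShape lam mu c.1 c.2 ∧ T c.1 c.2 = 2*i'+2 ∧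
      ¬ (c.1 < n+s ∨ (c.1 = n+s ∧ 2 ≤ c.2))}.Nonempty := by
    rw [← Set.ncard_pos (shape_finite lam mu _)]
    exact hB2
  obtain ⟨⟨k, j⟩, hkin, hkT, hkP⟩ := hne
  simp only at hkin hkT hkP
  have hjpos : 1 ≤ j := by have := hkin.2.1; omega
  have hkge : n+s < k := by
    rcases Nat.lt_or_ge k (n+s) with h | h
    · exact absurd (Or.inl h) hkP
    rcases Nat.eq_or_lt_of_le h with h' | h'
    · exfalso
      have hj1 : j = 1 := by
        rcases Nat.lt_or_ge j 2 with hj | hj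
        · omega
        · exact absurd (Or.inr ⟨h'.symm, hj⟩) hkP
      rw [← h', hj1] at hkT
      omega
    · exact h'
  obtain ⟨d, rfl⟩ : ∃ d, k = n+s+d := ⟨k - (n+s), by omega⟩
  have hd1 : 1 ≤ d := by omega
  -- column 1 cells exist in all rows n+1..n+s+d
  have inshape_col1 : ∀ r, n+1 ≤ r → r ≤ n+s+d → InShape lam mu r 1 := by
    intro r hr1 hr2
    refine ⟨by omega, ?_, ?_⟩
    · rw [muzero r (by omega)]; omega
    · have h1 : lam.part (n+s+d) ≤ lam.part r := lam.antitone r (n+s+d) hr2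
      have h2 : j ≤ lam.part (n+s+d) := hkin.2.2
      omega
  -- strict increase down column 1
  have hchain : ∀ e, e ≤ d → T (n+s) 1 + e ≤ T (n+s+e) 1 := by
    intro e
    induction e with
    | zero => intro _; simp
    | succ e ih =>
      intro hed
      have h1 := ih (by omega)
      have h2 := hT.ssyt.colLt (n+s+e) 1
        (inshape_col1 (n+s+e) (by omega) (by omega))
        (inshape_col1 (n+s+e+1) (by omega) (by omega))
      have h3 : T (n+s+(e+1)) 1 = T (n+s+e+1) 1 := rfl
      omega
  -- weak increase along row n+s+d
  have hrowch : ∀ b, 1 ≤ b → b ≤ j → T (n+s+d) 1 ≤ T (n+s+d) b := by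
    intro b
    induction b with
    | zero => omega
    | succ b ih =>
      intro _ hbj
      rcases Nat.eq_zero_or_pos b with hb0 | hb1
      · subst hb0; exact le_refl _
      · have h1 := ih hb1 (by omega)
        have hsh : ∀ b', 1 ≤ b' → b' ≤ j → InShape lam mu (n+s+d) b' := by
          intro b' h1' h2'
          refine ⟨by omega, ?_, ?_⟩
          · rw [muzero (n+s+d) (by omega)]; omega
          · have := hkin.2.2; omega
        have h2 := hT.ssyt.rowLe (n+s+d) b (hsh b hb1 (by omega)) (hsh (b+1) (by omega) hbj)
        omega
  have hT1 : T (n+s+d) 1 ≤ 2*i'+2 := le_of_le_of_eq (hrowch j hjpos le_rfl) hkT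
  have hch := hchain d le_rfl
  have hdeq : d = 1 := by omega
  subst hdeq
  have hch1 := hchain 1 le_rfl
  have hval : T (n+s+1) 1 = 2*i'+2 := by omega
  refine ⟨s+1, by omega, ?_, ?_, ?_⟩
  · exact inshape_col1 (n+s+1) (by omega) (by omega)
  · show Even (T (n+s+1) 1)
    rw [hval]
    exact ⟨i'+1, by ring⟩
  · show T (n+s+1) 1 < 2*(s+1)
    omega
end

section
/- Let T be an LR tableau of shape λ/μ and even weight ν on [2n] with ℓ(μ) ≤ n, and suppose T fails the Sundaram property. Let n+t+1 (t ≥ 0) be the minimal row of T where a Sundaram violation occurs. Then T(n+t,1) = 2t, T(n+t+1,1) = 2t+1, T(n+t+2,1) = 2(t+1), and T(n+k,1) ≥ 2k for all 1 ≤ k ≤ t−1. -/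
namespace Stmt11Aux

/-- Parts of `μ` beyond its length vanish. -/
lemma mu_zero (mu : YPart) (n : ℕ) (hmu : mu.len ≤ n) {k : ℕ} (hk : n < k) :
    mu.part k = 0 := by
  by_contra h
  obtain ⟨N, hN⟩ := mu.evZero
  have hbdd : BddAbove {k | 1 ≤ k ∧ mu.part k ≠ 0} := by
    refine ⟨N, fun x hx => ?_⟩
    by_contra hx'
    exact hx.2 (hN x (le_of_not_ge hx'))
  have : k ≤ mu.len := le_csSup hbdd ⟨by omega, h⟩
  omega

/-- Entries weakly increase along a row. -/
lemma row_mono {lam mu : YPart} {N : ℕ} {T : ℕ → ℕ → ℕ} (hS : IsSSYT lam mu N T)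
    {k j : ℕ} (d : ℕ) (h1 : InShape lam mu k j) (h2 : InShape lam mu k (j + d)) :
    T k j ≤ T k (j + d) := by
  induction d with
  | zero => exact le_refl _
  | succ d ih =>
    have hmid : InShape lam mu k (j + d) := by
      refine ⟨h1.1, ?_, ?_⟩
      · have := h1.2.1; omega
      · have := h2.2.2; omega
    exact le_trans (ih hmid) (hS.rowLe k (j + d) hmid h2)

/-- Entries strictly increase down a column, with the expected gap. -/
lemma col_chain {lam mu : YPart} {N : ℕ} {T : ℕ → ℕ → ℕ} (hS : IsSSYT lam mu N T)
    {k j : ℕ} (d : ℕ) (h1 : InShape lam mu k j) (h2 : InShape lam mu (k + d) j) :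
    T k j + d ≤ T (k + d) j := by
  induction d with
  | zero => simp
  | succ d ih =>
    have h1k := h1.1
    have hmid : InShape lam mu (k + d) j := by
      refine ⟨by omega, ?_, ?_⟩
      · exact lt_of_le_of_lt (mu.antitone k (k + d) (Nat.le_add_right _ _)) h1.2.1
      · exact le_trans h2.2.2 (lam.antitone (k + d) (k + d + 1) (by omega))
    have hcol : T (k + d) j < T ((k + d) + 1) j := hS.colLt (k + d) j hmid h2
    have hih := ih hmid
    show T k j + (d + 1) ≤ T ((k + d) + 1) j
    omega

/-- The set of cells with a given entry and property is finite. -/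
lemma cnt_finite (lam mu : YPart) (T : ℕ → ℕ → ℕ) (P : ℕ → ℕ → Prop) (i : ℕ) :
    {c : ℕ × ℕ | InShape lam mu c.1 c.2 ∧ T c.1 c.2 = i ∧ P c.1 c.2}.Finite := by
  obtain ⟨N, hN⟩ := lam.evZero
  apply Set.Finite.subset ((Set.finite_Iio N).prod (Set.finite_Iic (lam.part 0)))
  rintro ⟨a, b⟩ ⟨hin, -, -⟩
  have ha : 1 ≤ a := hin.1
  have hm : mu.part a < b := hin.2.1
  have hb : b ≤ lam.part a := hin.2.2
  simp only [Set.mem_prod, Set.mem_Iio, Set.mem_Iic]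
  constructor
  · by_contra h
    have := hN a (le_of_not_gt h)
    omega
  · exact le_trans hb (lam.antitone 0 a (Nat.zero_le _))

lemma cnt_eq_of (lam mu : YPart) (T : ℕ → ℕ → ℕ) (P Q : ℕ → ℕ → Prop) (i : ℕ)
    (h : ∀ a b, InShape lam mu a b → T a b = i → (P a b ↔ Q a b)) :
    cnt lam mu T P i = cnt lam mu T Q i := by
  unfold cnt
  congr 1
  ext ⟨a, b⟩
  simp only [Set.mem_setOf_eq]
  constructor
  · rintro ⟨h1, h2, h3⟩; exact ⟨h1, h2, (h a b h1 h2).mp h3⟩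
  · rintro ⟨h1, h2, h3⟩; exact ⟨h1, h2, (h a b h1 h2).mpr h3⟩

lemma cnt_lt_of (lam mu : YPart) (T : ℕ → ℕ → ℕ) (P Q : ℕ → ℕ → Prop) (i : ℕ)
    (hPQ : ∀ a b, P a b → Q a b) (a₀ b₀ : ℕ)
    (hin : InShape lam mu a₀ b₀) (hTv : T a₀ b₀ = i) (hQ : Q a₀ b₀) (hP : ¬ P a₀ b₀) :
    cnt lam mu T P i < cnt lam mu T Q i := by
  apply Set.ncard_lt_ncard
  · constructor
    · rintro ⟨a, b⟩ ⟨h1, h2, h3⟩; exact ⟨h1, h2, hPQ a b h3⟩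
    · intro hsub
      have := hsub (a := (a₀, b₀)) ⟨hin, hTv, hQ⟩
      exact hP this.2.2
  · exact cnt_finite lam mu T Q i

/-- Column-1-ish induction up to the minimal violating row: in any column meeting
row `n+t+1`, the entry in row `n+k` is at least `2k` for `1 ≤ k ≤ t`. -/
lemma col_ge {n t : ℕ} {lam mu nu : YPart} {T : ℕ → ℕ → ℕ}
    (hT : IsLR lam mu nu (2*n) T) (hmu : mu.len ≤ n)
    (hmin : ∀ k, k < n+t+1 → ¬ SundViolRow n lam mu T k)
    {j : ℕ} (hj : InShape lam mu (n+t+1) j) :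
    ∀ k, 1 ≤ k → k ≤ t → InShape lam mu (n+k) j ∧ 2*k ≤ T (n+k) j := by
  have hshape : ∀ k, 1 ≤ k → k ≤ t + 1 → InShape lam mu (n + k) j := by
    intro k h1 h2
    refine ⟨by omega, ?_, le_trans hj.2.2 (lam.antitone (n+k) (n+t+1) (by omega))⟩
    rw [mu_zero mu n hmu (by omega)]
    have := hj.2.1
    omega
  intro k
  induction k with
  | zero => intro h _; omega
  | succ k ih =>
    intro _ hk2
    have hs : InShape lam mu (n+(k+1)) j := hshape (k+1) (by omega) (by omega)
    refine ⟨hs, ?_⟩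
    rcases Nat.eq_zero_or_pos k with hk0 | hk0
    · subst hk0
      by_contra h
      have hpos : 1 ≤ T (n+(0+1)) j := (hT.ssyt.pos _ _ hs).1
      have hT1 : T (n+(0+1)) j = 2*0 + 1 := by omega
      exact hmin (n+(0+1)) (by omega) ⟨j, 0, hs, hT1, by omega⟩
    · obtain ⟨hsk, hge⟩ := ih hk0 (by omega)
      have hlt : T (n+k) j < T (n+(k+1)) j := hT.ssyt.colLt (n+k) j hsk hs
      by_contra h
      have hT1 : T (n+(k+1)) j = 2*k + 1 := by omega
      exact hmin (n+(k+1)) (by omega) ⟨j, k, hs, hT1, by omega⟩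

/-- Using evenness of the weight and the Yamanouchi property: some `2t+2`
occurs strictly below row `n+t+1`. -/
lemma ex2t2 {n t : ℕ} {lam mu nu : YPart} {T : ℕ → ℕ → ℕ}
    (hT : IsLR lam mu nu (2*n) T) (hnu : nu.IsEven)
    (hin1 : InShape lam mu (n+t+1) 1) (hT1 : T (n+t+1) 1 = 2*t + 1) :
    ∃ r j, n+t+2 ≤ r ∧ InShape lam mu r j ∧ T r j = 2*t + 2 := by
  by_contra hcon
  push_neg at hcon
  have hw1 : cnt lam mu T (fun _ _ => True) (2*t+1) = nu.part (2*t+1) :=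
    hT.weight (2*t+1) (by omega)
  have hw2 : cnt lam mu T (fun _ _ => True) (2*t+2) = nu.part (2*t+2) :=
    hT.weight (2*t+2) (by omega)
  have heq : nu.part (2*t+1) = nu.part (2*t+2) := hnu t
  -- every cell with entry 2t+2 has row ≤ n+t+1
  have hrows : ∀ a b, InShape lam mu a b → T a b = 2*t+2 → a ≤ n+t+1 := by
    intro a b ha hb
    by_contra h
    exact hcon a b (by omega) ha hb
  by_cases hrow : ∃ c, InShape lam mu (n+t+1) c ∧ T (n+t+1) c = 2*t+2
  · -- some 2t+2 in row n+t+1; take the leftmost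
    set S : Set ℕ := {c | InShape lam mu (n+t+1) c ∧ T (n+t+1) c = 2*t+2} with hS
    have hmem : sInf S ∈ S := Nat.sInf_mem hrow
    set c₀ := sInf S with hc₀
    have hc₀2 : 2 ≤ c₀ := by
      rcases Nat.lt_or_ge c₀ 2 with h | h
      · interval_cases c₀
        · exact absurd hmem.1.2.1 (by omega)
        · exact absurd hmem.2 (by rw [hT1]; omega)
      · exact h
    have hyam := hT.yam (n+t+1) c₀ (2*t+1) (by omega)
    have hA : cnt lam mu T (fun a b => a < n+t+1 ∨ (a = n+t+1 ∧ c₀ ≤ b)) (2*t+2)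
        = cnt lam mu T (fun _ _ => True) (2*t+2) := by
      apply cnt_eq_of
      intro a b ha hb
      simp only [iff_true]
      have h1 := hrows a b ha hb
      rcases Nat.lt_or_ge a (n+t+1) with h2 | h2
      · exact Or.inl h2
      · have ha' : a = n+t+1 := by omega
        refine Or.inr ⟨ha', Nat.sInf_le ?_⟩
        rw [hS]; exact ⟨ha' ▸ ha, ha' ▸ hb⟩
    have hB : cnt lam mu T (fun a b => a < n+t+1 ∨ (a = n+t+1 ∧ c₀ ≤ b)) (2*t+1)
        < cnt lam mu T (fun _ _ => True) (2*t+1) := by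
      apply cnt_lt_of lam mu T _ _ _ (fun _ _ _ => trivial) (n+t+1) 1 hin1 hT1 trivial
      rintro (h | ⟨-, h⟩) <;> omega
    have h2 : cnt lam mu T (fun a b => a < n+t+1 ∨ (a = n+t+1 ∧ c₀ ≤ b)) (2*t+2)
        ≤ cnt lam mu T (fun a b => a < n+t+1 ∨ (a = n+t+1 ∧ c₀ ≤ b)) (2*t+1) := hyam
    omega
  · -- no 2t+2 in row n+t+1: all of them are in rows ≤ n+t
    push_neg at hrow
    have hyam := hT.yam (n+t+1) (lam.part (n+t+1) + 1) (2*t+1) (by omega)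
    have hA : cnt lam mu T
        (fun a b => a < n+t+1 ∨ (a = n+t+1 ∧ lam.part (n+t+1) + 1 ≤ b)) (2*t+2)
        = cnt lam mu T (fun _ _ => True) (2*t+2) := by
      apply cnt_eq_of
      intro a b ha hb
      simp only [iff_true]
      have h1 := hrows a b ha hb
      rcases Nat.lt_or_ge a (n+t+1) with h2 | h2
      · exact Or.inl h2
      · have ha' : a = n+t+1 := by omega
        exact absurd (ha' ▸ hb) (hrow b (ha' ▸ ha))
    have hB : cnt lam mu T
        (fun a b => a < n+t+1 ∨ (a = n+t+1 ∧ lam.part (n+t+1) + 1 ≤ b)) (2*t+1)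
        < cnt lam mu T (fun _ _ => True) (2*t+1) := by
      apply cnt_lt_of lam mu T _ _ _ (fun _ _ _ => trivial) (n+t+1) 1 hin1 hT1 trivial
      have := hin1.2.2
      rintro (h | ⟨-, h⟩) <;> omega
    have h2 : cnt lam mu T
        (fun a b => a < n+t+1 ∨ (a = n+t+1 ∧ lam.part (n+t+1) + 1 ≤ b)) (2*t+2)
        ≤ cnt lam mu T
        (fun a b => a < n+t+1 ∨ (a = n+t+1 ∧ lam.part (n+t+1) + 1 ≤ b)) (2*t+1) := hyam
    omega

end Stmt11Aux

open Stmt11Aux in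
/-- If an LR tableau of even weight with `ℓ(μ) ≤ n` fails the
Sundaram property, with minimal violating row `n+t+1`, then `T(n+t,1) = 2t`,
`T(n+t+1,1) = 2t+1`, `T(n+t+2,1) = 2(t+1)`, and `T(n+k,1) ≥ 2k` for
`1 ≤ k ≤ t−1`.  (For `t = 0`, `T(n,1) = 0` by the convention that cells of `μ`
carry the entry `0`.) -/
theorem stmt11 (n t : ℕ) (lam mu nu : YPart) (hl : lam.len ≤ 2*n)
    (hsub : mu.Sub lam) (hmu : mu.len ≤ n) (hnu : nu.IsEven) (T : ℕ → ℕ → ℕ)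
    (hT : IsLR lam mu nu (2*n) T)
    (hviol : SundViolRow n lam mu T (n+t+1))
    (hmin : ∀ k, k < n+t+1 → ¬ SundViolRow n lam mu T k) :
    T (n+t) 1 = 2*t ∧ T (n+t+1) 1 = 2*t + 1 ∧ T (n+t+2) 1 = 2*(t+1) ∧
      ∀ k, 1 ≤ k → k ≤ t - 1 → 2*k ≤ T (n+k) 1 := by
  obtain ⟨jv, iv, hvin, hvT, hvlt⟩ := hviol
  have hiv : iv ≤ t := by omega
  have hjv1 : 1 ≤ jv := by have := hvin.2.1; omega
  have hin1 : InShape lam mu (n+t+1) 1 := by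
    refine ⟨by omega, ?_, le_trans hjv1 hvin.2.2⟩
    rw [Stmt11Aux.mu_zero mu n hmu (by omega)]; omega
  obtain ⟨e, he⟩ : ∃ e, jv = 1 + e := ⟨jv - 1, by omega⟩
  have hupper : T (n+t+1) 1 ≤ 2*t + 1 := by
    have hvin' : InShape lam mu (n+t+1) (1+e) := he ▸ hvin
    have h := Stmt11Aux.row_mono hT.ssyt e hin1 hvin'
    rw [← he] at h
    rw [hvT] at h
    omega
  have hlower : 2*t + 1 ≤ T (n+t+1) 1 := by
    rcases Nat.eq_zero_or_pos t with ht | ht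
    · have := (hT.ssyt.pos (n+t+1) 1 hin1).1; omega
    · obtain ⟨hst, hgt⟩ := Stmt11Aux.col_ge hT hmu hmin hin1 t ht le_rfl
      have h : T (n+t) 1 < T (n+t+1) 1 := hT.ssyt.colLt (n+t) 1 hst hin1
      omega
  have P2 : T (n+t+1) 1 = 2*t + 1 := by omega
  have P1 : T (n+t) 1 = 2*t := by
    rcases Nat.eq_zero_or_pos t with ht | ht
    · subst ht
      have hout : T n 1 = 0 := by
        apply hT.ssyt.outside
        rintro ⟨h1n, hmu1, -⟩
        have hiv0 : iv = 0 := by omega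
        have hsn : InShape lam mu n jv :=
          ⟨h1n, by omega, le_trans hvin.2.2 (lam.antitone n (n+0+1) (by omega))⟩
        have hlt : T n jv < T (n+0+1) jv := hT.ssyt.colLt n jv hsn hvin
        have hp := (hT.ssyt.pos n jv hsn).1
        rw [hvT, hiv0] at hlt
        omega
      simpa using hout
    · obtain ⟨hst, hgt⟩ := Stmt11Aux.col_ge hT hmu hmin hin1 t ht le_rfl
      have h : T (n+t) 1 < T (n+t+1) 1 := hT.ssyt.colLt (n+t) 1 hst hin1
      omega
  have P3 : T (n+t+2) 1 = 2*(t+1) := by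
    obtain ⟨r, j', hr, hinr, hTr⟩ := Stmt11Aux.ex2t2 hT hnu hin1 P2
    obtain ⟨d, hd⟩ : ∃ d, r = (n+t+2) + d := ⟨r - (n+t+2), by omega⟩
    subst hd
    have hj'1 : 1 ≤ j' := by have := hinr.2.1; omega
    have hin2j : InShape lam mu (n+t+2) j' := by
      refine ⟨by omega, ?_,
        le_trans hinr.2.2 (lam.antitone (n+t+2) (n+t+2+d) (by omega))⟩
      rw [Stmt11Aux.mu_zero mu n hmu (by omega)]; omega
    have hchain := Stmt11Aux.col_chain hT.ssyt d hin2j hinr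
    obtain ⟨e2, he2⟩ : ∃ e2, j' = 1 + e2 := ⟨j' - 1, by omega⟩
    have hin21 : InShape lam mu (n+t+2) 1 := by
      refine ⟨by omega, ?_, le_trans hj'1 hin2j.2.2⟩
      rw [Stmt11Aux.mu_zero mu n hmu (by omega)]; omega
    have hin2j' : InShape lam mu (n+t+2) (1+e2) := he2 ▸ hin2j
    have hrow := Stmt11Aux.row_mono hT.ssyt e2 hin21 hin2j'
    rw [← he2] at hrow
    have hcol : T (n+t+1) 1 < T (n+t+2) 1 := hT.ssyt.colLt (n+t+1) 1 hin1 hin21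
    omega
  refine ⟨P1, P2, P3, ?_⟩
  intro k hk1 hk2
  rcases Nat.eq_zero_or_pos t with ht | ht
  · omega
  · exact (Stmt11Aux.col_ge hT hmu hmin hin1 k hk1 (by omega)).2
end

section
/- Let T be an LR tableau of shape λ/μ and even weight ν on [2n] with ℓ(μ) ≤ n, and suppose T fails the Sundaram property with minimal violating row n+t+1. Then ℓ(λ) ≥ n+t+2 and n ≥ t+2. -/
/-- Entries weakly increase along a row of a skew SSYT. -/
lemma row_mono_s12 {l m : YPart} {N : ℕ} {T : ℕ → ℕ → ℕ} (hs : IsSSYT l m N T)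
    {k b : ℕ} (hb : InShape l m k b) :
    ∀ j, b ≤ j → InShape l m k j → T k b ≤ T k j := by
  intro j hj
  induction j, hj using Nat.le_induction with
  | base => intro _; exact le_rfl
  | succ j hj ih =>
    intro hj1
    have hjin : InShape l m k j :=
      ⟨hb.1, lt_of_lt_of_le hb.2.1 hj, le_trans (Nat.le_succ j) hj1.2.2⟩
    exact le_trans (ih hjin) (hs.rowLe k j hjin hj1)

/-- The set counted by `cnt` is finite. -/
lemma cnt_finite (l m : YPart) (T : ℕ → ℕ → ℕ) (P : ℕ → ℕ → Prop) (i : ℕ) :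
    {c : ℕ × ℕ | InShape l m c.1 c.2 ∧ T c.1 c.2 = i ∧ P c.1 c.2}.Finite := by
  obtain ⟨Nl, hNl⟩ := l.evZero
  apply Set.Finite.subset ((Set.finite_Icc 1 Nl).prod (Set.finite_Icc 1 (l.part 1)))
  rintro ⟨a, b⟩ ⟨⟨ha1, hm, hl⟩, -, -⟩
  have hm' : m.part a < b := hm
  have hl' : b ≤ l.part a := hl
  have hb1 : 1 ≤ b := Nat.lt_of_le_of_lt (Nat.zero_le _) hm'
  have haN : a ≤ Nl := by
    by_contra h
    have h0 := hNl a (by omega)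
    omega
  exact ⟨⟨ha1, haN⟩, ⟨hb1, le_trans hl' (l.antitone 1 a ha1)⟩⟩

/-- A nonzero row gives a lower bound on the length. -/
lemma len_ge {l : YPart} {k : ℕ} (h1 : 1 ≤ k) (h2 : l.part k ≠ 0) : k ≤ l.len := by
  obtain ⟨Nl, hNl⟩ := l.evZero
  refine le_csSup ⟨Nl, fun x hx => ?_⟩ ⟨h1, h2⟩
  by_contra h
  exact hx.2 (hNl x (by omega))

/-- If an LR tableau of even weight with `ℓ(μ) ≤ n` fails the
Sundaram property with minimal violating row `n+t+1`, then `ℓ(λ) ≥ n+t+2` and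
`n ≥ t+2`. -/
theorem stmt12 (n t : ℕ) (lam mu nu : YPart) (hl : lam.len ≤ 2*n)
    (hsub : mu.Sub lam) (hmu : mu.len ≤ n) (hnu : nu.IsEven) (T : ℕ → ℕ → ℕ)
    (hT : IsLR lam mu nu (2*n) T)
    (hviol : SundViolRow n lam mu T (n+t+1))
    (hmin : ∀ k, k < n+t+1 → ¬ SundViolRow n lam mu T k) :
    n + t + 2 ≤ lam.len ∧ t + 2 ≤ n := by
  obtain ⟨j, i, hin, hval, hlti⟩ := hviol
  -- there is an entry `2i+2` in a row `≥ n+t+2`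
  have key : ∃ k j', n+t+2 ≤ k ∧ InShape lam mu k j' ∧ T k j' = 2*i+2 := by
    by_contra hno
    push_neg at hno
    -- every cell with value `2i+2` lies in the Yamanouchi prefix ending just
    -- after the violating cell
    have hA : cnt lam mu T (fun _ _ => True) (2*i+2) ≤
        cnt lam mu T (fun a b => a < n+t+1 ∨ (a = n+t+1 ∧ j+1 ≤ b)) (2*i+2) := by
      unfold cnt
      refine Set.ncard_le_ncard ?_ (cnt_finite lam mu T (fun a b => a < n+t+1 ∨ (a = n+t+1 ∧ j+1 ≤ b)) (2*i+2))
      rintro ⟨a, b⟩ ⟨hab, htab, -⟩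
      refine ⟨hab, htab, ?_⟩
      rcases lt_or_ge a (n+t+1) with h | h
      · exact Or.inl h
      · have ha : a = n+t+1 := by
          by_contra hne
          exact hno a b (by omega) hab htab
        refine Or.inr ⟨ha, ?_⟩
        by_contra hble
        have hab' : InShape lam mu (n+t+1) b := by rw [← ha]; exact hab
        have hmono := row_mono_s12 hT.ssyt hab' j (by omega) hin
        have htab' : T (n+t+1) b = 2*i+2 := by rw [← ha]; exact htab
        omega
    -- the prefix misses the violating cell of value `2i+1`
    have hB : cnt lam mu T (fun a b => a < n+t+1 ∨ (a = n+t+1 ∧ j+1 ≤ b)) (2*i+1) <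
        cnt lam mu T (fun _ _ => True) (2*i+1) := by
      unfold cnt
      refine Set.ncard_lt_ncard ?_ (cnt_finite lam mu T (fun _ _ => True) (2*i+1))
      constructor
      · rintro ⟨a, b⟩ ⟨hab, htab, -⟩
        exact ⟨hab, htab, trivial⟩
      · intro hsub2
        have hmem : ((n+t+1, j) : ℕ × ℕ) ∈
            {c : ℕ × ℕ | InShape lam mu c.1 c.2 ∧ T c.1 c.2 = 2*i+1 ∧ True} :=
          ⟨hin, hval, trivial⟩
        obtain ⟨-, -, hP⟩ := hsub2 hmem
        simp only at hP
        omega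
    have hyam := hT.yam (n+t+1) (j+1) (2*i+1) (by omega)
    have hw1 := hT.weight (2*i+1) (by omega)
    have hw2 := hT.weight (2*i+2) (by omega)
    have heven := hnu i
    have h22 : 2*i+1+1 = 2*i+2 := by omega
    rw [h22] at hyam
    omega
  obtain ⟨k, j', hk, hkin, -⟩ := key
  have hj'1 : 1 ≤ j' := Nat.lt_of_le_of_lt (Nat.zero_le _) hkin.2.1
  have hpart : 1 ≤ lam.part (n+t+2) :=
    le_trans (le_trans hj'1 hkin.2.2) (lam.antitone (n+t+2) k hk)
  have hlen : n+t+2 ≤ lam.len := len_ge (by omega) (by omega)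
  exact ⟨hlen, by omega⟩
end

section
/- Let T be an LR tableau of shape λ/μ and weight ν on [2n], and let G = G_μ(T) be its left companion, defined by the nested sequence μ = μ^{(2n)} ⊇ μ^{(2n−1)} ⊇ ⋯ ⊇ μ^{(1)}, where μ^{(2n−r+1)} is the shape occupied by entries < r (including the 0-entries of μ) in rows r, r+1, …, 2n of T. Then each μ^{(i)}/μ^{(i−1)} is a horizontal strip, so G is a semistandard tableau of shape μ on [2n]. -/
lemma key_subset (lam mu : YPart) (N : ℕ) (T : ℕ → ℕ → ℕ)
    (hS : IsSSYT lam mu N T) (k c c' : ℕ) (hc : 1 ≤ c) (hc' : c' ≤ c + 1) :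
    {j : ℕ | 1 ≤ j ∧ j ≤ lam.part (k+1) ∧ T (k+1) j < c'} ⊆
    {j : ℕ | 1 ≤ j ∧ j ≤ lam.part k ∧ T k j < c} := by
  rintro j ⟨h1, h2, h3⟩
  refine ⟨h1, le_trans h2 (lam.antitone k (k+1) (Nat.le_succ k)), ?_⟩
  by_cases hin : InShape lam mu k j
  · obtain ⟨hk1, hmj, hjl⟩ := hin
    have hin' : InShape lam mu (k+1) j :=
      ⟨Nat.le_add_left 1 k, lt_of_le_of_lt (mu.antitone k (k+1) (Nat.le_succ k)) hmj, h2⟩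
    have := hS.colLt k j ⟨hk1, hmj, hjl⟩ hin'
    omega
  · have := hS.outside k j hin
    omega

theorem stmt13_impl (n : ℕ) (lam mu nu : YPart) (hl : lam.len ≤ 2*n)
    (hsub : mu.Sub lam) (T : ℕ → ℕ → ℕ) (hT : IsLR lam mu nu (2*n) T) :
    (∀ i, 1 ≤ i → compShape lam T n (2*n) i = mu.part i) ∧
    (∀ mm i, mm ≤ 2*n → 1 ≤ i →
      compShape lam T n mm (i+1) ≤ compShape lam T n mm i) ∧
    (∀ mm, 1 ≤ mm → mm ≤ 2*n →
      (∀ i, 1 ≤ i → compShape lam T n (mm-1) i ≤ compShape lam T n mm i) ∧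
      (∀ i, 1 ≤ i → compShape lam T n mm (i+1) ≤ compShape lam T n (mm-1) i)) := by
  have hfin : ∀ k c : ℕ, ({j : ℕ | 1 ≤ j ∧ j ≤ lam.part k ∧ T k j < c}).Finite :=
    fun k c => (Set.finite_Icc 1 (lam.part k)).subset (fun j hj => ⟨hj.1, hj.2.1⟩)
  refine ⟨?_, ?_, ?_⟩
  · -- top of the chain is μ
    intro i hi
    unfold compShape
    have e : 2*n - 2*n + i = i := by omega
    have e1 : 2*n - 2*n + 1 = 1 := by omega
    rw [e, e1]
    have hset : {j : ℕ | 1 ≤ j ∧ j ≤ lam.part i ∧ T i j < 1}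
        = ↑(Finset.Icc 1 (mu.part i)) := by
      ext j
      simp only [Finset.coe_Icc, Set.mem_Icc, Set.mem_setOf_eq]
      constructor
      · rintro ⟨h1, h2, h3⟩
        refine ⟨h1, ?_⟩
        by_contra hgt
        push_neg at hgt
        have := (hT.ssyt.pos i j ⟨hi, hgt, h2⟩).1
        omega
      · rintro ⟨h1, h2⟩
        have hnin : ¬ InShape lam mu i j := by
          rintro ⟨_, hmj, _⟩; omega
        have := hT.ssyt.outside i j hnin
        exact ⟨h1, le_trans h2 (hsub i), by omega⟩
    rw [hset, Set.ncard_coe_finset, Nat.card_Icc]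
    omega
  · -- each μ^{(mm)} is a partition (rows weakly decreasing)
    intro mm i hmm hi
    unfold compShape
    have e : 2*n - mm + (i+1) = (2*n - mm + i) + 1 := by omega
    simp only [e]
    exact Set.ncard_le_ncard
      (key_subset lam mu (2*n) T hT.ssyt (2*n - mm + i) (2*n - mm + 1) (2*n - mm + 1)
        (by omega) (by omega)) (hfin _ _)
  · -- consecutive differences are horizontal strips
    intro mm h1 h2
    have e1 : 2*n - (mm-1) + 1 = (2*n - mm + 1) + 1 := by omega
    constructor
    · intro i hi
      unfold compShape
      have e2 : 2*n - (mm-1) + i = (2*n - mm + i) + 1 := by omega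
      simp only [e1, e2]
      exact Set.ncard_le_ncard
        (key_subset lam mu (2*n) T hT.ssyt (2*n - mm + i) (2*n - mm + 1) ((2*n - mm + 1) + 1)
          (by omega) (le_refl _)) (hfin _ _)
    · intro i hi
      unfold compShape
      have e2 : 2*n - (mm-1) + i = 2*n - mm + (i+1) := by omega
      simp only [e1, e2]
      refine Set.ncard_le_ncard ?_ (hfin _ _)
      rintro j ⟨a, b, c⟩
      exact ⟨a, b, by omega⟩

/-- The left-companion chain of an LR tableau `T` is a chain of
partitions with top `μ` and all consecutive differences horizontal strips, so it
defines a semistandard tableau of shape `μ` on `[2n]`. -/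
theorem stmt13 (n : ℕ) (lam mu nu : YPart) (hl : lam.len ≤ 2*n)
    (hsub : mu.Sub lam) (T : ℕ → ℕ → ℕ) (hT : IsLR lam mu nu (2*n) T) :
    (∀ i, 1 ≤ i → compShape lam T n (2*n) i = mu.part i) ∧
    (∀ mm i, mm ≤ 2*n → 1 ≤ i →
      compShape lam T n mm (i+1) ≤ compShape lam T n mm i) ∧
    (∀ mm, 1 ≤ mm → mm ≤ 2*n →
      (∀ i, 1 ≤ i → compShape lam T n (mm-1) i ≤ compShape lam T n mm i) ∧
      (∀ i, 1 ≤ i → compShape lam T n mm (i+1) ≤ compShape lam T n (mm-1) i)) := by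
  exact stmt13_impl n lam mu nu hl hsub T hT
end

section
/- Let T be an LR tableau of shape λ/μ and even weight ν on [2n] with ℓ(μ) ≤ n. If n = ℓ(μ) and the first column of T below row n reads T(n+1,1)=2, T(n+2,1)=4, …, T(n+t−1,1)=2(t−1), T(n+t,1)=2t, T(n+t+1,1)=2t+1, T(n+t+2,1)=2(t+1) (minimal Sundaram violation in row n+t+1), then the left companion G = G_μ(T) satisfies G(ℓ(μ)−k,1) = 2(ℓ(μ)−k) for 0 ≤ k ≤ t−1 and G(ℓ(μ)−t,1) ≤ 2(ℓ(μ)−t)−2; in particular G is not symplectic, with bottom-most symplectic violation in cell (ℓ(μ)−t,1). -/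
/-- Case `n = ℓ(μ)` with first column below row `n` reading
`2, 4, …, 2t, 2t+1, 2(t+1)` (minimal Sundaram violation in row `n+t+1`): the
left companion `G = G_μ(T)` satisfies `G(ℓ(μ)−k,1) = 2(ℓ(μ)−k)` for
`0 ≤ k ≤ t−1` and `G(ℓ(μ)−t,1) ≤ 2(ℓ(μ)−t)−2`; in particular `G` is not
symplectic, with bottom-most symplectic violation in cell `(ℓ(μ)−t,1)`. -/
theorem stmt17 (n t : ℕ) (lam mu nu : YPart) (hl : lam.len ≤ 2*n)
    (hsub : mu.Sub lam) (hn : n = mu.len) (hnu : nu.IsEven) (T : ℕ → ℕ → ℕ)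
    (hT : IsLR lam mu nu (2*n) T) (ht : 1 ≤ t)
    (hcol : ∀ k, 1 ≤ k → k ≤ t → T (n+k) 1 = 2*k)
    (hodd : T (n+t+1) 1 = 2*t + 1)
    (heven : T (n+t+2) 1 = 2*(t+1)) :
    (∀ k, k ≤ t - 1 →
        leftCompanion lam T n (mu.len - k) 1 = 2*(mu.len - k)) ∧
    leftCompanion lam T n (mu.len - t) 1 ≤ 2*(mu.len - t) - 2 ∧
    ¬ IsSymplectic mu (leftCompanion lam T n) ∧
    leftCompanion lam T n (mu.len - t) 1 < 2*(mu.len - t) - 1 ∧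
    (∀ k, mu.len - t < k → k ≤ mu.len →
        2*k - 1 ≤ leftCompanion lam T n k 1) := by
  obtain ⟨N, hN⟩ := mu.evZero
  have hbdd : BddAbove {k | 1 ≤ k ∧ mu.part k ≠ 0} := by
    refine ⟨N, fun k hk => ?_⟩
    by_contra h
    push_neg at h
    exact hk.2 (hN k (le_of_lt h))
  have h0 : ∀ r, mu.len < r → mu.part r = 0 := by
    intro r hr
    by_contra h
    have h1 : 1 ≤ r := by omega
    have : r ≤ mu.len := le_csSup hbdd ⟨h1, h⟩
    omega
  have hshape : ∀ r j, T r j ≠ 0 → InShape lam mu r j := by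
    intro r j h
    by_contra hc
    exact h (hT.ssyt.outside r j hc)
  have hin2 : InShape lam mu (n+t+2) 1 := hshape _ _ (by rw [heven]; omega)
  have hnt : t + 1 ≤ n := by
    have := (hT.ssyt.pos _ _ hin2).2
    rw [heven] at this; omega
  have hmun : 1 ≤ mu.part n := by
    have hne : {k | 1 ≤ k ∧ mu.part k ≠ 0}.Nonempty := by
      by_contra h
      rw [Set.not_nonempty_iff_eq_empty] at h
      have : mu.len = 0 := by
        unfold YPart.len; rw [h]; exact csSup_empty
      omega
    have hmem := Nat.sSup_mem hne hbdd
    have : mu.part mu.len ≠ 0 := hmem.2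
    rw [hn]
    omega
  have hlam : ∀ j, 1 ≤ j → j ≤ t+2 → 1 ≤ lam.part (n+j) := by
    intro j h1 h2
    exact le_trans hin2.2.2 (lam.antitone (n+j) (n+t+2) (by omega))
  have hLB' : ∀ j, t+1 ≤ j → InShape lam mu (n+j) 1 → t + j ≤ T (n+j) 1 := by
    intro j hj
    induction j, hj using Nat.le_induction with
    | base => intro _; rw [show n + (t+1) = n + t + 1 by omega, hodd]; omega
    | succ j hj ih =>
      intro hins
      have hin' : InShape lam mu (n+j) 1 :=
        ⟨by omega, by rw [h0 (n+j) (by omega)]; omega,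
         le_trans hins.2.2 (lam.antitone (n+j) (n+(j+1)) (by omega))⟩
      have hlt := hT.ssyt.colLt (n+j) 1 hin' (by
        have : n + j + 1 = n + (j+1) := by omega
        rw [this]; exact hins)
      have := ih hin'
      have hEq : T (n+(j+1)) 1 = T (n+j+1) 1 := rfl
      omega
  have hrow : ∀ r, mu.part r = 0 → ∀ j, InShape lam mu r j → T r 1 ≤ T r j := by
    intro r hmu j
    induction j with
    | zero => intro h; exact absurd h.2.1 (by omega)
    | succ j ih =>
      intro h
      by_cases hj : j = 0
      · subst hj; exact le_refl _
      · have hin' : InShape lam mu r j := ⟨h.1, by omega, by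
          have := h.2.2; omega⟩
        exact le_trans (ih hin') (hT.ssyt.rowLe r j hin' h)
  have hmem : ∀ k mm, 1 ≤ lam.part (2*n - mm + k) → T (2*n - mm + k) 1 < 2*n - mm + 1 →
      1 ≤ compShape lam T n mm k := by
    intro k mm h1 h2
    unfold compShape
    have hfin : Set.Finite {j | 1 ≤ j ∧ j ≤ lam.part (2*n-mm+k) ∧ T (2*n-mm+k) j < 2*n-mm+1} :=
      (Set.finite_Icc 1 (lam.part (2*n-mm+k))).subset
        (fun j hj => Set.mem_Icc.mpr ⟨hj.1, hj.2.1⟩)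
    exact (Set.ncard_pos hfin).mpr ⟨1, le_refl 1, h1, h2⟩
  have hnmem : ∀ k mm, 1 ≤ compShape lam T n mm k →
      ∃ j, 1 ≤ j ∧ j ≤ lam.part (2*n-mm+k) ∧ T (2*n-mm+k) j < 2*n-mm+1 := by
    intro k mm h
    unfold compShape at h
    have hne : {j | 1 ≤ j ∧ j ≤ lam.part (2*n-mm+k) ∧ T (2*n-mm+k) j < 2*n-mm+1}.Nonempty :=
      Set.nonempty_of_ncard_ne_zero (by omega)
    obtain ⟨j, hj⟩ := hne
    exact ⟨j, hj⟩
  -- membership of 2*(n-k) in the sInf-set for row n-k, for k ≤ t-1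
  have hMmem : ∀ k, k ≤ t - 1 → 1 ≤ compShape lam T n (2*(n-k)) (n-k) := by
    intro k hk
    have hr : 2*n - 2*(n-k) + (n-k) = n + k := by omega
    apply hmem
    · rw [hr]
      rcases Nat.eq_zero_or_pos k with h0k | h1k
      · subst h0k
        exact le_trans hmun (hsub n)
      · exact hlam k h1k (by omega)
    · rw [hr]
      have hb : 2*n - 2*(n-k) + 1 = 2*k+1 := by omega
      rw [hb]
      rcases Nat.eq_zero_or_pos k with h0k | h1k
      · subst h0k
        have : T n 1 = 0 := hT.ssyt.outside n 1 (fun h => by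
          have := h.2.1; omega)
        simp [this]
      · rw [hcol k h1k (by omega)]; omega
  have main1 : ∀ k, k ≤ t - 1 →
      leftCompanion lam T n (mu.len - k) 1 = 2*(mu.len - k) := by
    intro k hk
    have hK : mu.len - k = n - k := by omega
    rw [hK]
    unfold leftCompanion
    apply le_antisymm
    · exact Nat.sInf_le (hMmem k hk)
    · by_contra h
      push_neg at h
      have hSne : Set.Nonempty {mm | 1 ≤ compShape lam T n mm (n-k)} :=
        ⟨2*(n-k), hMmem k hk⟩
      have hmin := Nat.sInf_mem hSne
      set mm := sInf {mm | 1 ≤ compShape lam T n mm (n-k)} with hmmdef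
      have hlt : mm < 2*(n-k) := h
      obtain ⟨j, hj1, hj2, hj3⟩ := hnmem (n-k) mm hmin
      set r := 2*n - mm + (n-k) with hrdef
      have hd2 : r = n + k + (2*(n-k) - mm) := by omega
      have hd3 : 2*n - mm = 2*k + (2*(n-k) - mm) := by omega
      set d := 2*(n-k) - mm with hddef
      have hd1 : 1 ≤ d := by omega
      have hmu0 : mu.part r = 0 := h0 r (by omega)
      have hinj : InShape lam mu r j := ⟨by omega, by omega, hj2⟩
      have hT1 : T r 1 ≤ T r j := hrow r hmu0 j hinj
      have hr' : r = n + (k + d) := by omega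
      rcases le_or_gt (k + d) t with hc | hc
      · have hTv : T (n + (k+d)) 1 = 2*(k+d) := hcol (k+d) (by omega) hc
        rw [← hr'] at hTv
        omega
      · have hin1 : InShape lam mu (n + (k+d)) 1 :=
          ⟨by omega, by rw [h0 (n+(k+d)) (by omega)]; omega, by
            rw [← hr']; omega⟩
        have hTv := hLB' (k+d) (by omega) hin1
        rw [← hr'] at hTv
        omega
  have main2 : leftCompanion lam T n (mu.len - t) 1 ≤ 2*(mu.len - t) - 2 := by
    have hK : mu.len - t = n - t := by omega
    rw [hK]
    unfold leftCompanion
    apply Nat.sInf_le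
    show 1 ≤ compShape lam T n (2*(n-t) - 2) (n-t)
    have hr : 2*n - (2*(n-t) - 2) + (n-t) = n + t + 2 := by omega
    apply hmem
    · rw [hr]; exact hin2.2.2
    · rw [hr, heven]
      omega
  have main4 : leftCompanion lam T n (mu.len - t) 1 < 2*(mu.len - t) - 1 := by
    have : 1 ≤ mu.len - t := by omega
    omega
  refine ⟨main1, main2, ?_, main4, ?_⟩
  · intro hsym
    have := hsym (mu.len - t) (by omega) (by omega)
    omega
  · intro k hk1 hk2
    have hk' : mu.len - (mu.len - k) = k := by omega
    have := main1 (mu.len - k) (by omega)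
    rw [hk'] at this
    omega
end

section
/- Let T be an LR tableau of shape λ/μ and weight ν on [2n] with left companion chain μ = μ^{(2n)} ⊇ ⋯ ⊇ μ^{(1)}. Suppose T(ℓ(μ)+1,1) = s ∈ [ℓ(μ)] with s even. Then ℓ(μ^{(2n)}) > ℓ(μ^{(2n−1)}) > ⋯ > ℓ(μ^{(2n−s+1)}) = ℓ(μ^{(2n−s)}). -/
lemma YPart.bddAbove_support (p : YPart) : BddAbove {k | 1 ≤ k ∧ p.part k ≠ 0} := by
  obtain ⟨N, hN⟩ := p.evZero
  refine ⟨N, fun k hk => ?_⟩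
  by_contra h
  exact hk.2 (hN k (by omega))

lemma YPart.part_pos_of_le_len (p : YPart) {k : ℕ} (h1 : 1 ≤ k) (h2 : k ≤ p.len) :
    1 ≤ p.part k := by
  rcases Set.eq_empty_or_nonempty {k | 1 ≤ k ∧ p.part k ≠ 0} with he | hne
  · exfalso
    have : p.len = 0 := by
      unfold YPart.len
      rw [he]
      exact csSup_empty
    omega
  · have hmem := Nat.sSup_mem hne p.bddAbove_support
    have h3 := p.antitone k p.len h2
    have h4 : p.part p.len ≠ 0 := hmem.2
    omega

lemma YPart.part_zero_of_len_lt (p : YPart) {k : ℕ} (h : p.len < k) : p.part k = 0 := by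
  by_contra hne
  have hk1 : 1 ≤ k := by omega
  have : k ≤ p.len := le_csSup p.bddAbove_support ⟨hk1, hne⟩
  omega

lemma row_mono_s19 {lam mu : YPart} {N : ℕ} {T : ℕ → ℕ → ℕ} (h : IsSSYT lam mu N T)
    {k j1 j2 : ℕ} (h1 : InShape lam mu k j1) (h2 : j2 ≤ lam.part k) (h12 : j1 ≤ j2) :
    T k j1 ≤ T k j2 := by
  obtain ⟨hk1, hm1, hl1⟩ := h1
  revert h2
  induction j2, h12 using Nat.le_induction with
  | base => exact fun _ => le_refl _
  | succ j2 hj12 ih =>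
      intro h2
      have hs2 : InShape lam mu k j2 := ⟨hk1, by omega, by omega⟩
      have hs3 : InShape lam mu k (j2+1) := ⟨hk1, by omega, h2⟩
      exact le_trans (ih (by omega)) (h.rowLe k j2 hs2 hs3)

lemma col1_lb {lam mu : YPart} {N : ℕ} {T : ℕ → ℕ → ℕ} (h : IsSSYT lam mu N T)
    {s : ℕ} (hval : T (mu.len + 1) 1 = s)
    {k : ℕ} (hk : mu.len + 1 ≤ k) (hlk : 1 ≤ lam.part k) :
    s + (k - (mu.len + 1)) ≤ T k 1 := by
  induction k, hk using Nat.le_induction with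
  | base => simp [hval]
  | succ k hk ih =>
      have hlk' : 1 ≤ lam.part k := le_trans hlk (lam.antitone k (k+1) (by omega))
      have hm : mu.part k = 0 := mu.part_zero_of_len_lt (by omega)
      have hm' : mu.part (k+1) = 0 := mu.part_zero_of_len_lt (by omega)
      have hsh1 : InShape lam mu k 1 := ⟨by omega, by omega, hlk'⟩
      have hsh2 : InShape lam mu (k+1) 1 := ⟨by omega, by omega, hlk⟩
      have := h.colLt k 1 hsh1 hsh2
      have := ih hlk'
      omega

lemma compShape_ne_zero {lam mu : YPart} {N : ℕ} {T : ℕ → ℕ → ℕ} (h : IsSSYT lam mu N T)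
    (n mm i : ℕ) (hk : 1 ≤ 2*n - mm + i) :
    compShape lam T n mm i ≠ 0 ↔
      (1 ≤ lam.part (2*n - mm + i) ∧ T (2*n - mm + i) 1 < 2*n - mm + 1) := by
  unfold compShape
  set k := 2*n - mm + i with hkdef
  set r := 2*n - mm + 1 with hrdef
  have hfin : {j : ℕ | 1 ≤ j ∧ j ≤ lam.part k ∧ T k j < r}.Finite :=
    (Set.finite_Icc 1 (lam.part k)).subset (fun j hj => Set.mem_Icc.mpr ⟨hj.1, hj.2.1⟩)
  constructor
  · intro h0
    obtain ⟨j, hj1, hj2, hj3⟩ := Set.nonempty_of_ncard_ne_zero h0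
    refine ⟨le_trans hj1 hj2, ?_⟩
    by_cases hm : mu.part k = 0
    · have hsh : InShape lam mu k 1 := ⟨hk, by omega, le_trans hj1 hj2⟩
      have := row_mono_s19 h hsh hj2 hj1
      omega
    · have : T k 1 = 0 := h.outside k 1 (fun hc => by have := hc.2.1; omega)
      omega
  · rintro ⟨hlp, hT1⟩
    have hne : ({j : ℕ | 1 ≤ j ∧ j ≤ lam.part k ∧ T k j < r}).Nonempty :=
      ⟨1, le_refl 1, hlp, hT1⟩
    exact ((Set.ncard_pos hfin).mpr hne).ne'

lemma shapeLen_formula (n : ℕ) (lam mu : YPart) (hsub : mu.Sub lam)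
    {N : ℕ} (T : ℕ → ℕ → ℕ) (hT : IsSSYT lam mu N T)
    (s : ℕ) (hcell : InShape lam mu (mu.len + 1) 1)
    (hval : T (mu.len + 1) 1 = s) (hs1 : 1 ≤ s) (hs2 : s ≤ mu.len)
    (hs2n : s ≤ 2*n) (d : ℕ) (hd : d ≤ s) :
    shapeLen (compShape lam T n (2*n - d)) =
      (if d < s then mu.len else mu.len + 1) - d := by
  set p := mu.len with hp
  set L := (if d < s then p else p + 1) - d with hLdef
  have hL : (d < s ∧ L = p - d) ∨ (d = s ∧ L = p + 1 - d) := by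
    by_cases hds : d < s
    · left; exact ⟨hds, by rw [hLdef, if_pos hds]⟩
    · right; exact ⟨by omega, by rw [hLdef, if_neg hds]⟩
  have harith : 2*n - (2*n - d) = d := by omega
  have key : ∀ i, 1 ≤ i → (compShape lam T n (2*n-d) i ≠ 0 ↔
      (1 ≤ lam.part (d+i) ∧ T (d+i) 1 < d+1)) := by
    intro i hi
    have := compShape_ne_zero hT n (2*n-d) i (by omega)
    rwa [harith] at this
  have hchar : ∀ i, 1 ≤ i → ((1 ≤ lam.part (d+i) ∧ T (d+i) 1 < d+1) ↔ i ≤ L) := by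
    intro i hi
    constructor
    · rintro ⟨hlp, hT1⟩
      by_cases hkp : d + i ≤ p
      · omega
      · by_cases hk1 : d + i = mu.len + 1
        · rw [hk1, hval] at hT1
          omega
        · exfalso
          have := col1_lb hT hval (k := d + i) (by omega) hlp
          omega
    · intro hiL
      by_cases hkp : d + i ≤ p
      · have hμ : 1 ≤ mu.part (d + i) := mu.part_pos_of_le_len (by omega) hkp
        refine ⟨le_trans hμ (hsub _), ?_⟩
        have : T (d+i) 1 = 0 := hT.outside _ 1 (fun hc => by have := hc.2.1; omega)
        omega
      · have hk1 : d + i = mu.len + 1 := by omega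
        refine ⟨by rw [hk1]; exact hcell.2.2, ?_⟩
        rw [hk1, hval]
        omega
  have hset : {i | 1 ≤ i ∧ compShape lam T n (2*n-d) i ≠ 0} = Set.Icc 1 L := by
    ext i
    simp only [Set.mem_setOf_eq, Set.mem_Icc]
    constructor
    · rintro ⟨hi, hne⟩
      exact ⟨hi, (hchar i hi).1 ((key i hi).1 hne)⟩
    · rintro ⟨hi, hiL⟩
      exact ⟨hi, (key i hi).2 ((hchar i hi).2 hiL)⟩
  have hL1 : 1 ≤ L := by omega
  show sSup {i | 1 ≤ i ∧ compShape lam T n (2*n-d) i ≠ 0} = L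
  rw [hset]
  apply le_antisymm
  · exact csSup_le ⟨1, Set.mem_Icc.mpr ⟨le_refl 1, hL1⟩⟩
      (fun i hi => (Set.mem_Icc.mp hi).2)
  · exact le_csSup ⟨L, fun i hi => (Set.mem_Icc.mp hi).2⟩
      (Set.mem_Icc.mpr ⟨hL1, le_refl L⟩)

/-- If `T(ℓ(μ)+1,1) = s ∈ [ℓ(μ)]` with `s` even, then the lengths
of the left-companion chain satisfy
`ℓ(μ^{(2n)}) > ℓ(μ^{(2n−1)}) > ⋯ > ℓ(μ^{(2n−s+1)}) = ℓ(μ^{(2n−s)})`. -/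
theorem stmt19 (n : ℕ) (lam mu nu : YPart) (hl : lam.len ≤ 2*n)
    (hsub : mu.Sub lam) (T : ℕ → ℕ → ℕ) (hT : IsLR lam mu nu (2*n) T)
    (s : ℕ) (hcell : InShape lam mu (mu.len + 1) 1)
    (hval : T (mu.len + 1) 1 = s) (hs1 : 1 ≤ s) (hs2 : s ≤ mu.len)
    (hse : Even s) :
    (∀ mm, 2*n - s + 2 ≤ mm → mm ≤ 2*n →
        shapeLen (compShape lam T n (mm-1)) < shapeLen (compShape lam T n mm)) ∧
    shapeLen (compShape lam T n (2*n - s + 1)) =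
      shapeLen (compShape lam T n (2*n - s)) := by
  have hs2n : s ≤ 2*n := by
    have := (hT.ssyt.pos (mu.len + 1) 1 hcell).2
    omega
  constructor
  · intro mm h1 h2
    have A := shapeLen_formula n lam mu hsub T hT.ssyt s hcell hval hs1 hs2 hs2n
      (2*n - mm) (by omega)
    rw [show 2*n - (2*n - mm) = mm by omega,
      if_pos (show 2*n - mm < s by omega)] at A
    have B := shapeLen_formula n lam mu hsub T hT.ssyt s hcell hval hs1 hs2 hs2n
      (2*n - mm + 1) (by omega)
    rw [show 2*n - (2*n - mm + 1) = mm - 1 by omega,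
      if_pos (show 2*n - mm + 1 < s by omega)] at B
    rw [A, B]
    omega
  · have A := shapeLen_formula n lam mu hsub T hT.ssyt s hcell hval hs1 hs2 hs2n
      (s - 1) (by omega)
    rw [show 2*n - (s - 1) = 2*n - s + 1 by omega,
      if_pos (show s - 1 < s by omega)] at A
    have B := shapeLen_formula n lam mu hsub T hT.ssyt s hcell hval hs1 hs2 hs2n
      s (le_refl s)
    rw [if_neg (show ¬ s < s by omega)] at B
    rw [A, B]
    omega
end
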